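/- Let G be a d-regular graph and A a set of d+1 positive integers such that the set A⁻ of nonzero pairwise differences of A is disjoint from 2A⁻ (the set of doubled nonzero differences). Then every proper edge coloring of G with colors from A is an additive edge coloring of G. -/

import Mathlib

open scoped Classical
open Finset

namespace AddEdge

variable {V : Type*} [Fintype V] [DecidableEq V]

/-- `N'(e)`-sum: the sum of the colors of the edges of `G` sharing an endpoint
with `e`, excluding `e` itself. -/
noncomputable def nbrSum (G : SimpleGraph V) (c : Sym2 V → ℕ) (e : Sym2 V) : ℕ :=
  ∑ f ∈ univ.filter (fun f => f ∈ G.edgeSet ∧ f ≠ e ∧ ∃ v, v ∈ e ∧ v ∈ f), c f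

/-- `c` is a proper edge coloring of `G`: distinct incident edges get distinct colors. -/
def IsProperEdgeColoring (G : SimpleGraph V) (c : Sym2 V → ℕ) : Prop :=
  ∀ e ∈ G.edgeSet, ∀ f ∈ G.edgeSet, e ≠ f → (∃ v, v ∈ e ∧ v ∈ f) → c e ≠ c f

/-- `c` is an additive edge coloring of `G`: distinct incident edges have distinct
sums of colors over their incident-edge neighborhoods. -/
def IsAdditiveEdgeColoring (G : SimpleGraph V) (c : Sym2 V → ℕ) : Prop :=
  ∀ e ∈ G.edgeSet, ∀ f ∈ G.edgeSet, e ≠ f → (∃ v, v ∈ e ∧ v ∈ f) →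
    nbrSum G c e ≠ nbrSum G c f

/-- The chromatic index: the least `k` such that `G` has a proper edge coloring
with colors from `{1, …, k}`. -/
noncomputable def chromIndex (G : SimpleGraph V) : ℕ :=
  sInf {k | ∃ c : Sym2 V → ℕ, (∀ e ∈ G.edgeSet, c e ∈ Finset.Icc 1 k) ∧
    IsProperEdgeColoring G c}

/-- The proper additive chromatic index `η'_p(G)`: the least `k` such that `G` has an
edge coloring with colors from `{1, …, k}` that is both proper and additive. -/
noncomputable def properAddIndex (G : SimpleGraph V) : ℕ :=
  sInf {k | ∃ c : Sym2 V → ℕ, (∀ e ∈ G.edgeSet, c e ∈ Finset.Icc 1 k) ∧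
    IsProperEdgeColoring G c ∧ IsAdditiveEdgeColoring G c}

/-- If `A` is a set of `d+1` positive integers whose set of nonzero
differences `A⁻` is disjoint from `2A⁻`, then every proper edge coloring of a
`d`-regular graph `G` with colors from `A` is an additive edge coloring. -/
theorem additive_of_diff_condition (G : SimpleGraph V) (d : ℕ)
    (hreg : G.IsRegularOfDegree d) (A : Finset ℕ)
    (hApos : ∀ a ∈ A, 0 < a) (hAcard : A.card = d + 1)
    (hdiff : ∀ x ∈ A, ∀ y ∈ A, x ≠ y → ∀ z ∈ A, ∀ w ∈ A, z ≠ w →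
      (x : ℤ) - y ≠ 2 * ((z : ℤ) - w))
    (c : Sym2 V → ℕ) (hcol : ∀ e ∈ G.edgeSet, c e ∈ A)
    (hc : IsProperEdgeColoring G c) :
    IsAdditiveEdgeColoring G c := by
  classical
  intro e he f hf hef ⟨x, hxe, hxf⟩
  -- vertex sums
  set T : ℕ := ∑ a ∈ A, a with hT
  set σ : V → ℕ := fun v => ∑ g ∈ univ.filter (fun g => g ∈ G.edgeSet ∧ v ∈ g), c g with hσdef
  have hσ : ∀ v : V, ∃ m ∈ A, σ v + m = T := by
    intro v
    set S : Finset (Sym2 V) := univ.filter (fun g => g ∈ G.edgeSet ∧ v ∈ g) with hS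
    have hSinc : S = G.incidenceFinset v := by
      ext g
      simp [hS, SimpleGraph.mem_incidenceFinset, SimpleGraph.incidenceSet]
    have hScard : S.card = d := by
      rw [hSinc, SimpleGraph.card_incidenceFinset_eq_degree, hreg v]
    have hinj : Set.InjOn c S := by
      intro g₁ hg₁ g₂ hg₂ hcc
      by_contra hne
      simp only [hS, mem_coe, mem_filter] at hg₁ hg₂
      exact hc g₁ hg₁.2.1 g₂ hg₂.2.1 hne ⟨v, hg₁.2.2, hg₂.2.2⟩ hcc
    set B : Finset ℕ := S.image c with hB
    have hBA : B ⊆ A := by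
      intro b hb
      obtain ⟨g, hg, rfl⟩ := mem_image.mp hb
      simp only [hS, mem_filter] at hg
      exact hcol g hg.2.1
    have hBcard : B.card = d := by
      rw [hB, Finset.card_image_of_injOn hinj, hScard]
    have hcd : (A \ B).card = 1 := by
      rw [Finset.card_sdiff_of_subset hBA, hBcard, hAcard]
      omega
    obtain ⟨m, hm⟩ := Finset.card_eq_one.mp hcd
    refine ⟨m, (Finset.mem_sdiff.mp (hm ▸ Finset.mem_singleton_self m)).1, ?_⟩
    have h1 : ∑ b ∈ A \ B, b + ∑ b ∈ B, b = T := Finset.sum_sdiff hBA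
    have h2 : ∑ b ∈ B, b = σ v := by
      rw [hB, Finset.sum_image hinj]
    rw [hm, Finset.sum_singleton] at h1
    omega
  -- decomposition of nbrSum
  have hdec : ∀ u v : V, s(u, v) ∈ G.edgeSet →
      nbrSum G c s(u, v) + (c s(u, v) + c s(u, v)) = σ u + σ v := by
    intro u v huv
    have huvne : u ≠ v := (G.adj_symm (G.mem_edgeSet.mp huv)).ne'
    set e' : Sym2 V := s(u, v) with he'
    set Su : Finset (Sym2 V) := univ.filter (fun g => g ∈ G.edgeSet ∧ u ∈ g) with hSu
    set Sv : Finset (Sym2 V) := univ.filter (fun g => g ∈ G.edgeSet ∧ v ∈ g) with hSv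
    have hinter : Su ∩ Sv = {e'} := by
      ext g
      simp only [mem_inter, hSu, hSv, mem_filter, mem_univ, true_and, mem_singleton]
      constructor
      · rintro ⟨⟨hg, hu⟩, ⟨_, hv⟩⟩
        exact (Sym2.mem_and_mem_iff huvne).mp ⟨hu, hv⟩
      · rintro rfl
        exact ⟨⟨huv, Sym2.mem_mk_left u v⟩, ⟨huv, Sym2.mem_mk_right u v⟩⟩
    have hfilter : univ.filter (fun g => g ∈ G.edgeSet ∧ g ≠ e' ∧ ∃ w, w ∈ e' ∧ w ∈ g)
        = (Su ∪ Sv).erase e' := by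
      ext g
      simp only [mem_filter, mem_univ, true_and, mem_erase, mem_union, hSu, hSv,
        he', Sym2.mem_iff]
      constructor
      · rintro ⟨hg, hne, w, (rfl | rfl), hw⟩
        · exact ⟨hne, Or.inl ⟨hg, hw⟩⟩
        · exact ⟨hne, Or.inr ⟨hg, hw⟩⟩
      · rintro ⟨hne, (⟨hg, hw⟩ | ⟨hg, hw⟩)⟩
        · exact ⟨hg, hne, u, Or.inl rfl, hw⟩
        · exact ⟨hg, hne, v, Or.inr rfl, hw⟩
    have hemem : e' ∈ Su ∪ Sv := by
      simp [hSu, mem_union, he', huv, Sym2.mem_mk_left, G.mem_edgeSet.mp huv]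
    have h1 : nbrSum G c e' + c e' = ∑ g ∈ Su ∪ Sv, c g := by
      rw [nbrSum, hfilter]
      exact Finset.sum_erase_add _ _ hemem
    have h2 : ∑ g ∈ Su ∪ Sv, c g + ∑ g ∈ Su ∩ Sv, c g = ∑ g ∈ Su, c g + ∑ g ∈ Sv, c g :=
      Finset.sum_union_inter
    rw [hinter, Finset.sum_singleton] at h2
    have h3 : ∑ g ∈ Su, c g = σ u := rfl
    have h4 : ∑ g ∈ Sv, c g = σ v := rfl
    omega
  -- decompose e and f
  obtain ⟨y, rfl⟩ := Sym2.mem_iff_exists.mp hxe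
  obtain ⟨w, rfl⟩ := Sym2.mem_iff_exists.mp hxf
  have hyw : y ≠ w := fun h => hef (by rw [h])
  have h1 := hdec x y he
  have h2 := hdec x w hf
  obtain ⟨my, hmyA, hmy⟩ := hσ y
  obtain ⟨mw, hmwA, hmw⟩ := hσ w
  intro heq
  have hceA := hcol _ he
  have hcfA := hcol _ hf
  have hcc : c s(x, y) ≠ c s(x, w) :=
    hc _ he _ hf hef ⟨x, Sym2.mem_mk_left x y, Sym2.mem_mk_left x w⟩
  by_cases hmm : my = mw
  · apply hcc
    omega
  · exact hdiff my hmyA mw hmwA hmm (c s(x, w)) hcfA (c s(x, y)) hceA hcc.symm (by omega)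


end AddEdge
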